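/- arXiv:2404.04737 — 2 statements merged into one kernel-verified Lean document; each statement's English description precedes it below -/
import Mathlib

section
/- For every real z ≥ 1 one has 0 < K₁(z)/K₀(z) − 1 − 1/(2z) + 1/(8z²) ≤ 1/(8z³). -/
open Real MeasureTheory
open Set Filter

noncomputable section

/-- Modified Bessel function of the second kind, order 0. -/
def K0 (x : ℝ) : ℝ := ∫ t in Set.Ioi (0:ℝ), Real.exp (-x * Real.cosh t)

/-- Modified Bessel function of the second kind, order 1. -/
def K1 (x : ℝ) : ℝ := ∫ t in Set.Ioi (0:ℝ), Real.exp (-x * Real.cosh t) * Real.cosh t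

lemma cosh_ge_half (t : ℝ) : t / 2 ≤ Real.cosh t := by
  have h1 : Real.exp t / 2 ≤ Real.cosh t := by
    rw [Real.cosh_eq]; nlinarith [Real.exp_pos (-t)]
  nlinarith [Real.add_one_le_exp t]

lemma exp_tendsto {z : ℝ} (hz : 1 ≤ z) :
    Tendsto (fun t => Real.exp (-z * Real.cosh t)) atTop (nhds 0) := by
  apply Real.tendsto_exp_atBot.comp
  have hb : Tendsto (fun t : ℝ => -z * (t/2)) atTop atBot := by
    have h2 : Tendsto (fun t : ℝ => t / 2) atTop atTop :=
      Tendsto.atTop_div_const (by norm_num) tendsto_id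
    exact h2.const_mul_atTop_of_neg (by linarith)
  refine tendsto_atBot_mono' atTop ?_ hb
  filter_upwards [eventually_ge_atTop (0:ℝ)] with t ht
  have := cosh_ge_half t
  nlinarith

lemma base_integrable {z : ℝ} (hz : 1 ≤ z) :
    IntegrableOn (fun t => Real.exp (-z * Real.cosh t) * Real.cosh t) (Set.Ioi (0:ℝ)) := by
  have h4 : (0:ℝ) < 1/4 := by norm_num
  refine Integrable.mono (exp_neg_integrableOn_Ioi 0 h4) ?_ ?_
  · exact ((Real.continuous_exp.comp ((continuous_const.mul Real.continuous_cosh))).mul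
      Real.continuous_cosh).aestronglyMeasurable
  · filter_upwards [ae_restrict_mem measurableSet_Ioi] with t ht
    have ht0 : (0:ℝ) ≤ t := le_of_lt ht
    have hc1 : (1:ℝ) ≤ Real.cosh t := Real.one_le_cosh t
    have hcc : Real.cosh t ≤ Real.exp (Real.cosh t / 2) := by
      have h1 := Real.add_one_le_exp (Real.cosh t / 4)
      have h2 : Real.exp (Real.cosh t / 2) = Real.exp (Real.cosh t / 4) ^ 2 := by
        rw [← Real.exp_nat_mul]; ring_nf
      have h3 : (Real.cosh t/4+1)^2 ≤ (Real.exp (Real.cosh t/4))^2 :=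
        pow_le_pow_left₀ (by positivity) h1 2
      nlinarith [sq_nonneg (Real.cosh t / 4 - 1)]
    have hct := cosh_ge_half t
    rw [Real.norm_eq_abs, Real.norm_eq_abs, abs_of_pos (by positivity), abs_of_pos (by positivity)]
    calc Real.exp (-z * Real.cosh t) * Real.cosh t
        ≤ Real.exp (-z * Real.cosh t) * Real.exp (Real.cosh t / 2) :=
          mul_le_mul_of_nonneg_left hcc (le_of_lt (Real.exp_pos _))
      _ = Real.exp (-z * Real.cosh t + Real.cosh t / 2) := (Real.exp_add _ _).symm
      _ ≤ Real.exp (-(1/4) * t) := by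
          apply Real.exp_le_exp.2
          nlinarith

lemma integ_of_bound {z : ℝ} (hz : 1 ≤ z) {g : ℝ → ℝ} (hg : Continuous g) {M : ℝ}
    (hM : ∀ t, 0 ≤ t → |g t| ≤ M * Real.cosh t) :
    IntegrableOn (fun t => Real.exp (-z * Real.cosh t) * g t) (Set.Ioi (0:ℝ)) := by
  have hM0 : 0 ≤ M := by
    have := hM 0 le_rfl
    simp [Real.cosh_zero] at this
    exact (abs_nonneg _).trans this
  refine Integrable.mono ((base_integrable hz).const_mul M) ?_ ?_
  · exact ((Real.continuous_exp.comp (continuous_const.mul Real.continuous_cosh)).mul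
      hg).aestronglyMeasurable
  · filter_upwards [ae_restrict_mem measurableSet_Ioi] with t ht
    rw [Real.norm_eq_abs, Real.norm_eq_abs, abs_mul,
      abs_of_pos (Real.exp_pos _), abs_of_nonneg (by positivity :
        (0:ℝ) ≤ M * (Real.exp (-z * Real.cosh t) * Real.cosh t))]
    calc Real.exp (-z * Real.cosh t) * |g t|
        ≤ Real.exp (-z * Real.cosh t) * (M * Real.cosh t) :=
          mul_le_mul_of_nonneg_left (hM t (le_of_lt ht)) (le_of_lt (Real.exp_pos _))
      _ = M * (Real.exp (-z * Real.cosh t) * Real.cosh t) := by ring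

lemma ibp {z : ℝ} (hz : 1 ≤ z) (ψ ψ' : ℝ → ℝ) (hψ0 : ψ 0 = 0)
    (hd : ∀ t, HasDerivAt ψ (ψ' t) t)
    {C : ℝ} (hC : ∀ t, 0 ≤ t → |ψ t| ≤ C)
    (hint : IntegrableOn
      (fun t => Real.exp (-z * Real.cosh t) * (ψ' t - z * Real.sinh t * ψ t)) (Set.Ioi (0:ℝ))) :
    ∫ t in Set.Ioi (0:ℝ), Real.exp (-z * Real.cosh t) * (ψ' t - z * Real.sinh t * ψ t) = 0 := by
  set Φ : ℝ → ℝ := fun t => Real.exp (-z * Real.cosh t) * ψ t with hΦ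
  have hdΦ : ∀ t : ℝ, HasDerivAt Φ
      (Real.exp (-z * Real.cosh t) * (ψ' t - z * Real.sinh t * ψ t)) t := by
    intro t
    have h1 : HasDerivAt (fun t => Real.exp (-z * Real.cosh t))
        (Real.exp (-z * Real.cosh t) * (-z * Real.sinh t)) t :=
      ((Real.hasDerivAt_cosh t).const_mul (-z)).exp
    have := h1.mul (hd t)
    refine this.congr_deriv (Eq.symm ?_)
    ring
  have htend : Tendsto Φ atTop (nhds 0) := by
    apply squeeze_zero_norm' (a := fun t => C * Real.exp (-z * Real.cosh t))
    · filter_upwards [eventually_ge_atTop (0:ℝ)] with t ht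
      rw [hΦ, Real.norm_eq_abs, abs_mul, abs_of_pos (Real.exp_pos _)]
      calc Real.exp (-z * Real.cosh t) * |ψ t|
          ≤ Real.exp (-z * Real.cosh t) * C :=
            mul_le_mul_of_nonneg_left (hC t ht) (le_of_lt (Real.exp_pos _))
        _ = C * Real.exp (-z * Real.cosh t) := by ring
    · simpa using (exp_tendsto hz).const_mul C
  have hcont : ContinuousWithinAt Φ (Set.Ici (0:ℝ)) 0 :=
    ((hdΦ 0).continuousAt).continuousWithinAt
  have := integral_Ioi_of_hasDerivAt_of_tendsto hcont (fun x _ => hdΦ x) hint htend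
  rw [this, hΦ]
  simp [hψ0]

lemma hcne (t : ℝ) : Real.cosh t + 1 ≠ 0 := by positivity

lemma abs_sinh_le (t : ℝ) : |Real.sinh t| ≤ Real.cosh t := by
  rw [abs_le]
  have h1 := Real.cosh_add_sinh t
  have h2 := Real.cosh_sub_sinh t
  constructor <;> nlinarith [Real.exp_pos t, Real.exp_pos (-t)]

lemma hIe {z : ℝ} (hz : 1 ≤ z) :
    IntegrableOn (fun t => Real.exp (-z * Real.cosh t)) (Set.Ioi (0:ℝ)) := by
  have := integ_of_bound hz (g := fun _ => (1:ℝ)) continuous_const (M := 1)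
    (fun t _ => by simpa using Real.one_le_cosh t)
  simpa using this

lemma hIG {z : ℝ} (hz : 1 ≤ z) :
    IntegrableOn (fun t => Real.exp (-z * Real.cosh t) * (1/(Real.cosh t+1))) (Set.Ioi (0:ℝ)) := by
  refine integ_of_bound hz (continuous_const.div
    (Real.continuous_cosh.add continuous_const) hcne) (M := 1) (fun t _ => ?_)
  have h := Real.one_le_cosh t
  rw [abs_of_pos (by positivity)]
  rw [div_le_iff₀ (by positivity)]
  nlinarith

lemma lem1 {z : ℝ} (hz : 1 ≤ z) :
    ∫ t in Set.Ioi (0:ℝ), Real.exp (-z * Real.cosh t) * (1/(Real.cosh t+1)) =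
      z * (∫ t in Set.Ioi (0:ℝ), Real.exp (-z * Real.cosh t) * Real.cosh t)
        - z * ∫ t in Set.Ioi (0:ℝ), Real.exp (-z * Real.cosh t) := by
  set ψ : ℝ → ℝ := fun t => Real.sinh t / (Real.cosh t + 1) with hψ
  set ψ' : ℝ → ℝ := fun t => 1 / (Real.cosh t + 1) with hψ'
  have hd : ∀ t, HasDerivAt ψ (ψ' t) t := by
    intro t
    have h := (Real.hasDerivAt_sinh t).div ((Real.hasDerivAt_cosh t).add_const 1) (hcne t)
    refine h.congr_deriv (Eq.symm ?_)
    rw [hψ']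
    have hc := hcne t
    field_simp
    linear_combination (-1) * (Real.cosh_sq_sub_sinh_sq t)
  have hC : ∀ t, 0 ≤ t → |ψ t| ≤ 1 := by
    intro t _
    rw [hψ, abs_div, abs_of_pos (by positivity : (0:ℝ) < Real.cosh t + 1),
      div_le_one (by positivity)]
    have := abs_sinh_le t
    linarith
  have hfun : (fun t => Real.exp (-z * Real.cosh t) * (ψ' t - z * Real.sinh t * ψ t)) =
      fun t => Real.exp (-z * Real.cosh t) * (1/(Real.cosh t+1))
        - (z * (Real.exp (-z * Real.cosh t) * Real.cosh t)
            - z * Real.exp (-z * Real.cosh t)) := by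
    funext t
    rw [hψ, hψ']
    have hc := hcne t
    have hfactor : (1/(Real.cosh t+1) - z * Real.sinh t * (Real.sinh t / (Real.cosh t + 1))) =
        1/(Real.cosh t+1) - (z * Real.cosh t - z) := by
      field_simp
      linear_combination (z) * (Real.cosh_sq_sub_sinh_sq t)
    rw [hfactor]
    ring
  have hint : IntegrableOn
      (fun t => Real.exp (-z * Real.cosh t) * (ψ' t - z * Real.sinh t * ψ t))
      (Set.Ioi (0:ℝ)) := by
    rw [hfun]
    exact (hIG hz).sub (((base_integrable hz).const_mul z).sub ((hIe hz).const_mul z))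
  have h0 := ibp hz ψ ψ' (by simp [hψ]) hd hC hint
  rw [hfun] at h0
  have hY : IntegrableOn (fun t => z * (Real.exp (-z * Real.cosh t) * Real.cosh t)
      - z * Real.exp (-z * Real.cosh t)) (Set.Ioi (0:ℝ)) :=
    ((base_integrable hz).const_mul z).sub ((hIe hz).const_mul z)
  rw [integral_sub (hIG hz) hY,
    integral_sub ((base_integrable hz).const_mul z) ((hIe hz).const_mul z),
    integral_const_mul, integral_const_mul] at h0
  linarith

lemma hcne2 (t : ℝ) : (Real.cosh t + 1)^2 ≠ 0 := pow_ne_zero _ (hcne t)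
lemma hcne3 (t : ℝ) : (Real.cosh t + 1)^3 ≠ 0 := pow_ne_zero _ (hcne t)

lemma hIH {z : ℝ} (hz : 1 ≤ z) :
    IntegrableOn (fun t => Real.exp (-z * Real.cosh t) * ((2 - Real.cosh t)/(Real.cosh t+1)^2))
      (Set.Ioi (0:ℝ)) := by
  refine integ_of_bound hz (Continuous.div (by continuity) (by continuity) hcne2) (M := 1)
    (fun t _ => ?_)
  have h := Real.one_le_cosh t
  rw [abs_div, abs_of_pos (by positivity : (0:ℝ) < (Real.cosh t + 1)^2), div_le_iff₀ (by positivity)]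
  rw [abs_le]
  constructor <;> nlinarith

lemma hIP {z : ℝ} (hz : 1 ≤ z) :
    IntegrableOn (fun t => Real.exp (-z * Real.cosh t) *
      ((Real.cosh t - 1) * (Real.cosh t + 7)/(Real.cosh t+1)^2)) (Set.Ioi (0:ℝ)) := by
  refine integ_of_bound hz (Continuous.div (by continuity) (by continuity) hcne2) (M := 1)
    (fun t _ => ?_)
  have h := Real.one_le_cosh t
  rw [abs_div, abs_of_pos (by positivity : (0:ℝ) < (Real.cosh t + 1)^2), div_le_iff₀ (by positivity)]
  rw [abs_le]
  constructor <;>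
    nlinarith [mul_nonneg (sq_nonneg (Real.cosh t - 1)) (by linarith : (0:ℝ) ≤ Real.cosh t + 3)]

lemma hIQ {z : ℝ} (hz : 1 ≤ z) :
    IntegrableOn (fun t => Real.exp (-z * Real.cosh t) *
      ((20 - 11 * Real.cosh t - Real.cosh t^2)/(Real.cosh t+1)^3)) (Set.Ioi (0:ℝ)) := by
  refine integ_of_bound hz (Continuous.div (by continuity) (by continuity) hcne3) (M := 1)
    (fun t _ => ?_)
  have h := Real.one_le_cosh t
  rw [abs_div, abs_of_pos (by positivity : (0:ℝ) < (Real.cosh t + 1)^3), div_le_iff₀ (by positivity)]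
  rw [abs_le]
  constructor <;>
    nlinarith [mul_nonneg (by linarith : (0:ℝ) ≤ Real.cosh t - 1)
      (by nlinarith : (0:ℝ) ≤ Real.cosh t^3 + 4*Real.cosh t^2 + 8*Real.cosh t + 20)]

lemma lem2 {z : ℝ} (hz : 1 ≤ z) :
    ∫ t in Set.Ioi (0:ℝ), Real.exp (-z * Real.cosh t) * ((2 - Real.cosh t)/(Real.cosh t+1)^2) =
      z * (∫ t in Set.Ioi (0:ℝ), Real.exp (-z * Real.cosh t))
        - 2 * z * ∫ t in Set.Ioi (0:ℝ), Real.exp (-z * Real.cosh t) * (1/(Real.cosh t+1)) := by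
  set ψ : ℝ → ℝ := fun t => Real.sinh t / (Real.cosh t + 1)^2 with hψ
  set ψ' : ℝ → ℝ := fun t => (2 - Real.cosh t) / (Real.cosh t + 1)^2 with hψ'
  have hd : ∀ t, HasDerivAt ψ (ψ' t) t := by
    intro t
    have h := (Real.hasDerivAt_sinh t).div
      (((Real.hasDerivAt_cosh t).add_const 1).pow 2) (hcne2 t)
    refine h.congr_deriv (Eq.symm ?_)
    rw [hψ']
    have hc := hcne t
    simp only [Pi.pow_apply, Pi.mul_apply]
    field_simp
    linear_combination (-2*(Real.cosh t+1)) * (Real.cosh_sq_sub_sinh_sq t)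
  have hC : ∀ t, 0 ≤ t → |ψ t| ≤ 1 := by
    intro t _
    rw [hψ, abs_div, abs_of_pos (by positivity : (0:ℝ) < (Real.cosh t + 1)^2),
      div_le_one (by positivity)]
    have h1 := abs_sinh_le t
    have h := Real.one_le_cosh t
    nlinarith
  have hfun : (fun t => Real.exp (-z * Real.cosh t) * (ψ' t - z * Real.sinh t * ψ t)) =
      fun t => Real.exp (-z * Real.cosh t) * ((2 - Real.cosh t)/(Real.cosh t+1)^2)
        - (z * Real.exp (-z * Real.cosh t)
            - 2 * z * (Real.exp (-z * Real.cosh t) * (1/(Real.cosh t+1)))) := by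
    funext t
    rw [hψ, hψ']
    have hc := hcne t
    have hfactor : ((2 - Real.cosh t) / (Real.cosh t + 1)^2
        - z * Real.sinh t * (Real.sinh t / (Real.cosh t + 1)^2)) =
        (2 - Real.cosh t)/(Real.cosh t+1)^2 - (z - 2 * z * (1/(Real.cosh t+1))) := by
      field_simp
      linear_combination (z) * (Real.cosh_sq_sub_sinh_sq t)
    rw [hfactor]
    ring
  have hint : IntegrableOn
      (fun t => Real.exp (-z * Real.cosh t) * (ψ' t - z * Real.sinh t * ψ t))
      (Set.Ioi (0:ℝ)) := by
    rw [hfun]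
    exact (hIH hz).sub (((hIe hz).const_mul z).sub ((hIG hz).const_mul (2*z)))
  have h0 := ibp hz ψ ψ' (by simp [hψ]) hd hC hint
  rw [hfun] at h0
  have hY : IntegrableOn (fun t => z * Real.exp (-z * Real.cosh t)
      - 2 * z * (Real.exp (-z * Real.cosh t) * (1/(Real.cosh t+1)))) (Set.Ioi (0:ℝ)) :=
    ((hIe hz).const_mul z).sub ((hIG hz).const_mul (2*z))
  rw [integral_sub (hIH hz) hY,
    integral_sub ((hIe hz).const_mul z) ((hIG hz).const_mul (2*z)),
    integral_const_mul, integral_const_mul] at h0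
  linarith

lemma lem3 {z : ℝ} (hz : 1 ≤ z) :
    ∫ t in Set.Ioi (0:ℝ), Real.exp (-z * Real.cosh t) *
        ((20 - 11 * Real.cosh t - Real.cosh t^2)/(Real.cosh t+1)^3) =
      z * ∫ t in Set.Ioi (0:ℝ), Real.exp (-z * Real.cosh t) *
        ((Real.cosh t - 1) * (Real.cosh t + 7)/(Real.cosh t+1)^2) := by
  set ψ : ℝ → ℝ := fun t => Real.sinh t * (Real.cosh t + 7) / (Real.cosh t + 1)^3 with hψ
  set ψ' : ℝ → ℝ := fun t =>
    (20 - 11 * Real.cosh t - Real.cosh t^2) / (Real.cosh t + 1)^3 with hψ'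
  have hd : ∀ t, HasDerivAt ψ (ψ' t) t := by
    intro t
    have h := ((Real.hasDerivAt_sinh t).mul ((Real.hasDerivAt_cosh t).add_const 7)).div
      (((Real.hasDerivAt_cosh t).add_const 1).pow 3) (hcne3 t)
    refine h.congr_deriv (Eq.symm ?_)
    rw [hψ']
    have hc := hcne t
    simp only [Pi.pow_apply, Pi.mul_apply]
    field_simp
    linear_combination (-(2*(Real.cosh t^3+12*Real.cosh t^2+21*Real.cosh t+10))) * (Real.cosh_sq_sub_sinh_sq t)
  have hC : ∀ t, 0 ≤ t → |ψ t| ≤ 1 := by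
    intro t _
    rw [hψ, abs_div, abs_of_pos (by positivity : (0:ℝ) < (Real.cosh t + 1)^3),
      div_le_one (by positivity)]
    have h1 := abs_sinh_le t
    have h := Real.one_le_cosh t
    rw [abs_mul, abs_of_pos (by positivity : (0:ℝ) < Real.cosh t + 7)]
    nlinarith [mul_le_mul_of_nonneg_right h1 (by positivity : (0:ℝ) ≤ Real.cosh t + 7),
      mul_nonneg (by linarith : (0:ℝ) ≤ Real.cosh t - 1)
        (by nlinarith : (0:ℝ) ≤ Real.cosh t^2 + 3*Real.cosh t - 1)]
  have hfun : (fun t => Real.exp (-z * Real.cosh t) * (ψ' t - z * Real.sinh t * ψ t)) =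
      fun t => Real.exp (-z * Real.cosh t) *
          ((20 - 11 * Real.cosh t - Real.cosh t^2)/(Real.cosh t+1)^3)
        - z * (Real.exp (-z * Real.cosh t) *
            ((Real.cosh t - 1) * (Real.cosh t + 7)/(Real.cosh t+1)^2)) := by
    funext t
    rw [hψ, hψ']
    have hc := hcne t
    have hfactor : ((20 - 11 * Real.cosh t - Real.cosh t^2) / (Real.cosh t + 1)^3
        - z * Real.sinh t * (Real.sinh t * (Real.cosh t + 7) / (Real.cosh t + 1)^3)) =
        (20 - 11 * Real.cosh t - Real.cosh t^2)/(Real.cosh t+1)^3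
          - z * ((Real.cosh t - 1) * (Real.cosh t + 7)/(Real.cosh t+1)^2) := by
      field_simp
      linear_combination (z*(Real.cosh t+7)) * (Real.cosh_sq_sub_sinh_sq t)
    rw [hfactor]
    ring
  have hint : IntegrableOn
      (fun t => Real.exp (-z * Real.cosh t) * (ψ' t - z * Real.sinh t * ψ t))
      (Set.Ioi (0:ℝ)) := by
    rw [hfun]
    exact (hIQ hz).sub ((hIP hz).const_mul z)
  have h0 := ibp hz ψ ψ' (by simp [hψ]) hd hC hint
  rw [hfun] at h0
  rw [integral_sub (hIQ hz) ((hIP hz).const_mul z), integral_const_mul] at h0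
  linarith

theorem stmt0 (z : ℝ) (hz : 1 ≤ z) :
    0 < K1 z / K0 z - 1 - 1 / (2 * z) + 1 / (8 * z ^ 2) ∧
      K1 z / K0 z - 1 - 1 / (2 * z) + 1 / (8 * z ^ 2) ≤ 1 / (8 * z ^ 3) := by
  have hz0 : (0:ℝ) < z := lt_of_lt_of_le one_pos hz
  set B : ℝ := ∫ t in Set.Ioi (0:ℝ), Real.exp (-z * Real.cosh t) with hB
  set A : ℝ := ∫ t in Set.Ioi (0:ℝ), Real.exp (-z * Real.cosh t) * Real.cosh t with hA
  set G : ℝ := ∫ t in Set.Ioi (0:ℝ), Real.exp (-z * Real.cosh t) * (1/(Real.cosh t+1)) with hG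
  set H : ℝ := ∫ t in Set.Ioi (0:ℝ),
    Real.exp (-z * Real.cosh t) * ((2 - Real.cosh t)/(Real.cosh t+1)^2) with hH
  set P : ℝ := ∫ t in Set.Ioi (0:ℝ), Real.exp (-z * Real.cosh t) *
    ((Real.cosh t - 1) * (Real.cosh t + 7)/(Real.cosh t+1)^2) with hP
  set Q : ℝ := ∫ t in Set.Ioi (0:ℝ), Real.exp (-z * Real.cosh t) *
    ((20 - 11 * Real.cosh t - Real.cosh t^2)/(Real.cosh t+1)^3) with hQ
  have h1 : G = z * A - z * B := lem1 hz
  have h2 : H = z * B - 2 * z * G := lem2 hz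
  have h3 : Q = z * P := lem3 hz
  -- B - P = 4 * H
  have h4 : B - P = 4 * H := by
    rw [hB, hP, hH, ← integral_sub (hIe hz) (hIP hz), ← integral_const_mul]
    congr 1
    funext t
    have hc : Real.cosh t + 1 ≠ 0 := by positivity
    field_simp
    ring
  -- Q ≤ B
  have hQB : Q ≤ B := by
    have hsub : B - Q = ∫ t in Set.Ioi (0:ℝ), (Real.exp (-z * Real.cosh t)
        - Real.exp (-z * Real.cosh t) *
          ((20 - 11 * Real.cosh t - Real.cosh t^2)/(Real.cosh t+1)^3)) :=
      (integral_sub (hIe hz) (hIQ hz)).symm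
    have hnn : 0 ≤ B - Q := by
      rw [hsub]
      apply setIntegral_nonneg measurableSet_Ioi
      intro t _
      have hc := Real.one_le_cosh t
      have hcp : (0:ℝ) < (Real.cosh t + 1)^3 := by positivity
      have key : (20 - 11 * Real.cosh t - Real.cosh t^2)/(Real.cosh t+1)^3 ≤ 1 := by
        rw [div_le_one hcp]
        nlinarith [mul_nonneg (by linarith : (0:ℝ) ≤ Real.cosh t - 1)
          (by nlinarith : (0:ℝ) ≤ Real.cosh t^2 + 5*Real.cosh t + 19)]
      nlinarith [Real.exp_pos (-z * Real.cosh t)]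
    linarith
  -- positivity of B and P
  have hBpos : 0 < B := by
    rw [hB, setIntegral_pos_iff_support_of_nonneg_ae
      (Eventually.of_forall (fun t => le_of_lt (Real.exp_pos _))) (hIe hz)]
    have hsub : Set.Ioi (0:ℝ) ⊆
        Function.support (fun t => Real.exp (-z * Real.cosh t)) ∩ Set.Ioi 0 :=
      fun x hx => ⟨ne_of_gt (Real.exp_pos _), hx⟩
    calc (0:ENNReal) < volume (Set.Ioi (0:ℝ)) := by
          rw [Real.volume_Ioi]; exact ENNReal.zero_lt_top
      _ ≤ _ := measure_mono hsub
  have hPpos : 0 < P := by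
    have hnn : ∀ t : ℝ, 0 ≤ Real.exp (-z * Real.cosh t) *
        ((Real.cosh t - 1) * (Real.cosh t + 7)/(Real.cosh t+1)^2) := by
      intro t
      have hc := Real.one_le_cosh t
      have : (0:ℝ) ≤ (Real.cosh t - 1) * (Real.cosh t + 7) := by nlinarith
      positivity
    rw [hP, setIntegral_pos_iff_support_of_nonneg_ae
      (Eventually.of_forall (fun t => hnn t)) (hIP hz)]
    have hsub : Set.Ioi (0:ℝ) ⊆
        Function.support (fun t => Real.exp (-z * Real.cosh t) *
          ((Real.cosh t - 1) * (Real.cosh t + 7)/(Real.cosh t+1)^2)) ∩ Set.Ioi 0 := by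
      intro x hx
      have hc1 : 1 < Real.cosh x := by
        rw [Real.one_lt_cosh]
        exact ne_of_gt hx
      have h7 : (0:ℝ) < (Real.cosh x - 1) * (Real.cosh x + 7) := by nlinarith
      exact ⟨ne_of_gt (by positivity), hx⟩
    calc (0:ENNReal) < volume (Set.Ioi (0:ℝ)) := by
          rw [Real.volume_Ioi]; exact ENNReal.zero_lt_top
      _ ≤ _ := measure_mono hsub
  have key : 8*z^2*A = 4*z*B + 8*z^2*B - B + P := by
    linear_combination h4 + 4*h2 + (-8*z)*h1
  have hE : K1 z / K0 z - 1 - 1 / (2 * z) + 1 / (8 * z ^ 2) = P / (8*z^2*B) := by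
    have hK0 : K0 z = B := rfl
    have hK1 : K1 z = A := rfl
    rw [hK0, hK1]
    field_simp
    linear_combination (2) * key
  constructor
  · rw [hE]; positivity
  · rw [hE, div_le_div_iff₀ (by positivity) (by positivity)]
    nlinarith [mul_le_mul_of_nonneg_left hQB (by positivity : (0:ℝ) ≤ 8*z^2), h3]
end
end

section
/- There exist δ ∈ (0, 1/4) and c < 2 such that: (i) for all z ∈ (0, δ], |I₁(z)/I₀(z) − z/2| ≤ z²/8 and |I₀(z)/I₁(z) − 2/z − z/4| ≤ z²/8; and (ii) for all z ≥ δ, 1/z ≤ I₀(z)/I₁(z) − I₁(z)/I₀(z) ≤ c/z. -/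
open Real MeasureTheory

open intervalIntegral

noncomputable section

/-- Modified Bessel function of the first kind, order 0. -/
def I0 (x : ℝ) : ℝ := (1 / π) * ∫ t in (0:ℝ)..π, Real.exp (x * Real.cos t)

/-- Modified Bessel function of the first kind, order 1. -/
def I1 (x : ℝ) : ℝ := (1 / π) * ∫ t in (0:ℝ)..π, Real.exp (x * Real.cos t) * Real.cos t

lemma mom1 : ∫ t in (0:ℝ)..π, Real.cos t = 0 := by simp
lemma mom2 : ∫ t in (0:ℝ)..π, Real.cos t ^ 2 = π / 2 := by simp
lemma mom3 : ∫ t in (0:ℝ)..π, Real.cos t ^ 3 = 0 := by simp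
lemma mom4 : ∫ t in (0:ℝ)..π, Real.cos t ^ 4 = 3 * π / 8 := by
  have h := @integral_cos_pow 0 π 2
  rw [mom2] at h
  rw [h]; simp [Real.sin_pi]; ring

lemma exp_taylor3 {u : ℝ} (hu : |u| ≤ 1) :
    |Real.exp u - (1 + u + u^2/2 + u^3/6)| ≤ 5/96 * u^4 := by
  have h := Real.exp_bound hu (n := 4) (by norm_num)
  have : ∑ m ∈ Finset.range 4, u ^ m / m.factorial = 1 + u + u^2/2 + u^3/6 := by
    simp [Finset.sum_range_succ, Nat.factorial]
  rw [this] at h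
  have h4 : |u|^4 = u^4 := by
    rw [← abs_pow, abs_of_nonneg (by positivity)]
  rw [h4] at h
  calc |Real.exp u - (1 + u + u^2/2 + u^3/6)| ≤ u^4 * ((Nat.succ 4)/(Nat.factorial 4 * 4)) := h
    _ = 5/96 * u^4 := by norm_num [Nat.factorial]; ring

lemma ic {f : ℝ → ℝ} (h : Continuous f) : IntervalIntegrable f MeasureTheory.volume 0 π :=
  h.intervalIntegrable 0 π

lemma cexp (z : ℝ) : Continuous fun t : ℝ => Real.exp (z * Real.cos t) := by fun_prop

lemma intP (z : ℝ) :
    ∫ t in (0:ℝ)..π, (1 + z * Real.cos t + (z * Real.cos t)^2/2 + (z * Real.cos t)^3/6)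
      = π + π * z^2 / 4 := by
  have e1 : IntervalIntegrable (fun t : ℝ => 1 + z * Real.cos t) MeasureTheory.volume 0 π :=
    ic (by fun_prop)
  have e2 : IntervalIntegrable (fun t : ℝ => (z * Real.cos t)^2/2) MeasureTheory.volume 0 π :=
    ic (by fun_prop)
  have e3 : IntervalIntegrable (fun t : ℝ => (z * Real.cos t)^3/6) MeasureTheory.volume 0 π :=
    ic (by fun_prop)
  rw [show (fun t : ℝ => 1 + z * Real.cos t + (z * Real.cos t)^2/2 + (z * Real.cos t)^3/6)
      = fun t : ℝ => ((1 + z * Real.cos t) + (z * Real.cos t)^2/2) + (z * Real.cos t)^3/6 from rfl]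
  rw [integral_add (e1.add e2) e3, integral_add e1 e2]
  have h1 : ∫ t in (0:ℝ)..π, (1 + z * Real.cos t) = π := by
    rw [integral_add (ic (by fun_prop)) (ic (by fun_prop))]
    simp [intervalIntegral.integral_const_mul, mom1]
  have h2 : ∫ t in (0:ℝ)..π, (z * Real.cos t)^2/2 = π * z^2/4 := by
    simp_rw [mul_pow, show ∀ t:ℝ, z^2 * Real.cos t^2/2 = z^2/2 * Real.cos t^2 by intro t; ring]
    rw [intervalIntegral.integral_const_mul, mom2]; ring
  have h3 : ∫ t in (0:ℝ)..π, (z * Real.cos t)^3/6 = 0 := by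
    simp_rw [mul_pow, show ∀ t:ℝ, z^3 * Real.cos t^3/6 = z^3/6 * Real.cos t^3 by intro t; ring]
    rw [intervalIntegral.integral_const_mul, mom3]; ring
  rw [h1, h2, h3]; ring

lemma intPcos (z : ℝ) :
    ∫ t in (0:ℝ)..π, (1 + z * Real.cos t + (z * Real.cos t)^2/2 + (z * Real.cos t)^3/6) * Real.cos t
      = π * z / 2 + π * z^3 / 16 := by
  have : (fun t : ℝ => (1 + z * Real.cos t + (z * Real.cos t)^2/2 + (z * Real.cos t)^3/6) * Real.cos t)
      = fun t : ℝ => ((Real.cos t + z * Real.cos t^2) + (z^2/2 * Real.cos t^3 + z^3/6 * Real.cos t^4)) := by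
    funext t; ring
  rw [this, integral_add ((ic (by fun_prop)).add (ic (by fun_prop)))
      ((ic (by fun_prop)).add (ic (by fun_prop))),
    integral_add (ic (by fun_prop)) (ic (by fun_prop)),
    integral_add (ic (by fun_prop)) (ic (by fun_prop)),
    intervalIntegral.integral_const_mul, intervalIntegral.integral_const_mul, intervalIntegral.integral_const_mul, mom1, mom2, mom3, mom4]
  ring

lemma int_err (z : ℝ) (hz0 : 0 ≤ z) (hz : z ≤ 1) :
    ∫ t in (0:ℝ)..π, 5/96 * z^4 * Real.cos t^4 = 5 * π * z^4 / 256 := by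
  rw [intervalIntegral.integral_const_mul, mom4]; ring

lemma ptwise (z : ℝ) (hz0 : 0 ≤ z) (hz : z ≤ 1) (t : ℝ) :
    ‖Real.exp (z * Real.cos t) -
      (1 + z * Real.cos t + (z * Real.cos t)^2/2 + (z * Real.cos t)^3/6)‖
      ≤ 5/96 * z^4 * Real.cos t^4 := by
  have hu : |z * Real.cos t| ≤ 1 := by
    rw [abs_mul, abs_of_nonneg hz0]
    have := Real.abs_cos_le_one t
    nlinarith [abs_nonneg (Real.cos t)]
  have h := exp_taylor3 hu
  rw [Real.norm_eq_abs]
  calc |Real.exp (z * Real.cos t) - (1 + z * Real.cos t + (z * Real.cos t)^2/2 + (z * Real.cos t)^3/6)|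
      ≤ 5/96 * (z * Real.cos t)^4 := h
    _ = 5/96 * z^4 * Real.cos t^4 := by ring

lemma I0_est {z : ℝ} (hz0 : 0 ≤ z) (hz : z ≤ 1) : |I0 z - (1 + z^2/4)| ≤ 5 * z^4 / 256 := by
  have hsub : IntervalIntegrable (fun t : ℝ => Real.exp (z * Real.cos t) -
      (1 + z * Real.cos t + (z * Real.cos t)^2/2 + (z * Real.cos t)^3/6)) MeasureTheory.volume 0 π :=
    ic (by fun_prop)
  have key : ‖∫ t in (0:ℝ)..π, (Real.exp (z * Real.cos t) -
      (1 + z * Real.cos t + (z * Real.cos t)^2/2 + (z * Real.cos t)^3/6))‖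
      ≤ |∫ t in (0:ℝ)..π, 5/96 * z^4 * Real.cos t^4| :=
    norm_integral_le_abs_of_norm_le (Filter.Eventually.of_forall (fun t => ptwise z hz0 hz t))
      (ic (by fun_prop))
  rw [int_err z hz0 hz, integral_sub (ic (by fun_prop)) (ic (by fun_prop)), intP] at key
  rw [Real.norm_eq_abs, abs_of_nonneg (by positivity : (0:ℝ) ≤ 5*π*z^4/256)] at key
  have hπ := Real.pi_pos
  have : I0 z - (1 + z^2/4) =
      (1/π) * ((∫ t in (0:ℝ)..π, Real.exp (z * Real.cos t)) - (π + π * z^2/4)) := by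
    rw [I0]; field_simp
  rw [this, abs_mul, abs_of_nonneg (by positivity : (0:ℝ) ≤ 1/π)]
  calc 1/π * |(∫ t in (0:ℝ)..π, Real.exp (z * Real.cos t)) - (π + π * z^2/4)|
      ≤ 1/π * (5 * π * z^4/256) := by
        apply mul_le_mul_of_nonneg_left key (by positivity)
    _ = 5 * z^4/256 := by field_simp

lemma I1_est {z : ℝ} (hz0 : 0 ≤ z) (hz : z ≤ 1) : |I1 z - (z/2 + z^3/16)| ≤ 5 * z^4 / 256 := by
  have key : ‖∫ t in (0:ℝ)..π, ((Real.exp (z * Real.cos t) -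
      (1 + z * Real.cos t + (z * Real.cos t)^2/2 + (z * Real.cos t)^3/6)) * Real.cos t)‖
      ≤ |∫ t in (0:ℝ)..π, 5/96 * z^4 * Real.cos t^4| := by
    apply norm_integral_le_abs_of_norm_le _ (ic (by fun_prop))
    apply Filter.Eventually.of_forall
    intro t
    rw [norm_mul]
    calc ‖Real.exp (z * Real.cos t) -
          (1 + z * Real.cos t + (z * Real.cos t)^2/2 + (z * Real.cos t)^3/6)‖ * ‖Real.cos t‖
        ≤ (5/96 * z^4 * Real.cos t^4) * 1 := by
          apply mul_le_mul (ptwise z hz0 hz t) _ (norm_nonneg _) (by positivity)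
          rw [Real.norm_eq_abs]; exact Real.abs_cos_le_one t
      _ = 5/96 * z^4 * Real.cos t^4 := by ring
  have hexpand : (fun t : ℝ => (Real.exp (z * Real.cos t) -
      (1 + z * Real.cos t + (z * Real.cos t)^2/2 + (z * Real.cos t)^3/6)) * Real.cos t)
      = fun t : ℝ => Real.exp (z * Real.cos t) * Real.cos t -
        (1 + z * Real.cos t + (z * Real.cos t)^2/2 + (z * Real.cos t)^3/6) * Real.cos t := by
    funext t; ring
  rw [hexpand, integral_sub (ic (by fun_prop)) (ic (by fun_prop)), intPcos,
    int_err z hz0 hz] at key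
  rw [Real.norm_eq_abs, abs_of_nonneg (by positivity : (0:ℝ) ≤ 5*π*z^4/256)] at key
  have hπ := Real.pi_pos
  have : I1 z - (z/2 + z^3/16) =
      (1/π) * ((∫ t in (0:ℝ)..π, Real.exp (z * Real.cos t) * Real.cos t)
        - (π * z/2 + π * z^3/16)) := by
    rw [I1]; field_simp
  rw [this, abs_mul, abs_of_nonneg (by positivity : (0:ℝ) ≤ 1/π)]
  calc 1/π * |(∫ t in (0:ℝ)..π, Real.exp (z * Real.cos t) * Real.cos t) - (π * z/2 + π * z^3/16)|
      ≤ 1/π * (5 * π * z^4/256) := by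
        apply mul_le_mul_of_nonneg_left key (by positivity)
    _ = 5 * z^4/256 := by field_simp

lemma I0_ge_one (x : ℝ) : 1 ≤ I0 x := by
  have hπ := Real.pi_pos
  have hmono : ∫ t in (0:ℝ)..π, (1 + x * Real.cos t) ≤ ∫ t in (0:ℝ)..π, Real.exp (x * Real.cos t) := by
    apply integral_mono_on hπ.le (ic (by fun_prop)) (ic (by fun_prop))
    intro t _
    linarith [Real.add_one_le_exp (x * Real.cos t)]
  have h1 : ∫ t in (0:ℝ)..π, (1 + x * Real.cos t) = π := by
    rw [integral_add (ic (by fun_prop)) (ic (by fun_prop)), intervalIntegral.integral_const_mul, mom1]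
    simp
  rw [I0]
  rw [h1] at hmono
  rw [← sub_nonneg]
  have heq : 1/π * (∫ t in (0:ℝ)..π, Real.exp (x * Real.cos t)) - 1
      = 1/π * ((∫ t in (0:ℝ)..π, Real.exp (x * Real.cos t)) - π) := by field_simp
  rw [heq]
  have : (0:ℝ) ≤ (∫ t in (0:ℝ)..π, Real.exp (x * Real.cos t)) - π := by linarith
  positivity

lemma hasDerivAt_f0 (x : ℝ) :
    HasDerivAt (fun y : ℝ => ∫ t in (0:ℝ)..π, Real.exp (y * Real.cos t))
      (∫ t in (0:ℝ)..π, Real.exp (x * Real.cos t) * Real.cos t) x := by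
  have h := intervalIntegral.hasDerivAt_integral_of_dominated_loc_of_deriv_le
    (F := fun y t => Real.exp (y * Real.cos t))
    (F' := fun y t => Real.exp (y * Real.cos t) * Real.cos t)
    (x₀ := x) (a := 0) (b := π) (μ := MeasureTheory.volume)
    (bound := fun _ => Real.exp (|x| + 1)) (s := Metric.ball x 1) (Metric.ball_mem_nhds x one_pos)
    ?_ ?_ ?_ ?_ ?_ ?_
  · exact h.2
  · filter_upwards with y
    exact ((cexp y).aestronglyMeasurable).restrict
  · exact ic (cexp x)
  · exact (((cexp x).mul Real.continuous_cos).aestronglyMeasurable).restrict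
  · filter_upwards with t _ y hy
    rw [Real.norm_eq_abs, abs_mul, Real.abs_exp]
    have h1 : |Real.cos t| ≤ 1 := Real.abs_cos_le_one t
    have h2 : y * Real.cos t ≤ |x| + 1 := by
      have : |y| ≤ |x| + 1 := by
        have := mem_ball_iff_norm.mp hy
        calc |y| = |y - x + x| := by ring_nf
          _ ≤ |y - x| + |x| := abs_add_le _ _
          _ ≤ |x| + 1 := by rw [Real.norm_eq_abs] at this; linarith
      calc y * Real.cos t ≤ |y * Real.cos t| := le_abs_self _
        _ = |y| * |Real.cos t| := abs_mul _ _
        _ ≤ (|x| + 1) * 1 := by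
            apply mul_le_mul this h1 (abs_nonneg _) (by positivity)
        _ = |x| + 1 := by ring
    calc Real.exp (y * Real.cos t) * |Real.cos t| ≤ Real.exp (|x| + 1) * 1 := by
          apply mul_le_mul (Real.exp_le_exp.mpr h2) h1 (abs_nonneg _) (Real.exp_pos _).le
      _ = Real.exp (|x| + 1) := by ring
  · exact intervalIntegrable_const
  · filter_upwards with t _ y _
    simpa [mul_comm] using ((hasDerivAt_id y).mul_const (Real.cos t)).exp

lemma hasDerivAt_f1 (x : ℝ) :
    HasDerivAt (fun y : ℝ => ∫ t in (0:ℝ)..π, Real.exp (y * Real.cos t) * Real.cos t)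
      (∫ t in (0:ℝ)..π, Real.exp (x * Real.cos t) * Real.cos t ^ 2) x := by
  have h := intervalIntegral.hasDerivAt_integral_of_dominated_loc_of_deriv_le
    (F := fun y t => Real.exp (y * Real.cos t) * Real.cos t)
    (F' := fun y t => Real.exp (y * Real.cos t) * Real.cos t ^ 2)
    (x₀ := x) (a := 0) (b := π) (μ := MeasureTheory.volume)
    (bound := fun _ => Real.exp (|x| + 1)) (s := Metric.ball x 1) (Metric.ball_mem_nhds x one_pos)
    ?_ ?_ ?_ ?_ ?_ ?_
  · exact h.2
  · filter_upwards with y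
    exact (((cexp y).mul Real.continuous_cos).aestronglyMeasurable).restrict
  · exact ic (by fun_prop)
  · exact ((((cexp x).mul (Real.continuous_cos.pow 2))).aestronglyMeasurable).restrict
  · filter_upwards with t _ y hy
    rw [Real.norm_eq_abs, abs_mul, Real.abs_exp]
    have h1 : |Real.cos t| ≤ 1 := Real.abs_cos_le_one t
    have h1' : |Real.cos t ^ 2| ≤ 1 := by
      rw [abs_pow]
      calc |Real.cos t|^2 ≤ 1^2 := by
            apply pow_le_pow_left₀ (abs_nonneg _) h1
        _ = 1 := one_pow 2
    have h2 : y * Real.cos t ≤ |x| + 1 := by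
      have hyx : |y| ≤ |x| + 1 := by
        have := mem_ball_iff_norm.mp hy
        calc |y| = |y - x + x| := by ring_nf
          _ ≤ |y - x| + |x| := abs_add_le _ _
          _ ≤ |x| + 1 := by rw [Real.norm_eq_abs] at this; linarith
      calc y * Real.cos t ≤ |y * Real.cos t| := le_abs_self _
        _ = |y| * |Real.cos t| := abs_mul _ _
        _ ≤ (|x| + 1) * 1 := mul_le_mul hyx h1 (abs_nonneg _) (by positivity)
        _ = |x| + 1 := by ring
    calc Real.exp (y * Real.cos t) * |Real.cos t ^ 2|
        ≤ Real.exp (|x| + 1) * 1 :=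
          mul_le_mul (Real.exp_le_exp.mpr h2) h1' (abs_nonneg _) (Real.exp_pos _).le
      _ = Real.exp (|x| + 1) := by ring
  · exact intervalIntegrable_const
  · filter_upwards with t _ y _
    have := ((hasDerivAt_id y).mul_const (Real.cos t)).exp.mul_const (Real.cos t)
    simpa [mul_comm, mul_assoc, pow_two] using this

lemma parts_identity {x : ℝ} (hx : x ≠ 0) :
    ∫ t in (0:ℝ)..π, Real.exp (x * Real.cos t) * Real.cos t ^ 2
      = (∫ t in (0:ℝ)..π, Real.exp (x * Real.cos t))
        - (1/x) * ∫ t in (0:ℝ)..π, Real.exp (x * Real.cos t) * Real.cos t := by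
  have hd : ∀ t ∈ Set.uIcc (0:ℝ) π,
      HasDerivAt (fun u : ℝ => Real.exp (x * Real.cos u) * Real.sin u)
        (Real.exp (x * Real.cos t) * (Real.cos t - x * (1 - Real.cos t ^ 2))) t := by
    intro t _
    have h1 : HasDerivAt (fun u : ℝ => Real.exp (x * Real.cos u))
        (Real.exp (x * Real.cos t) * (x * (-Real.sin t))) t := by
      have := ((Real.hasDerivAt_cos t).const_mul x).exp
      simpa [mul_comm, mul_assoc] using this
    have := h1.mul (Real.hasDerivAt_sin t)
    refine this.congr_deriv (Eq.symm ?_)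
    have hs : Real.sin t ^ 2 = 1 - Real.cos t ^ 2 := Real.sin_sq t
    linear_combination (Real.exp (x * Real.cos t) * x) * hs
  have hint : IntervalIntegrable
      (fun t : ℝ => Real.exp (x * Real.cos t) * (Real.cos t - x * (1 - Real.cos t ^ 2)))
      MeasureTheory.volume 0 π := ic (by fun_prop)
  have h := intervalIntegral.integral_eq_sub_of_hasDerivAt hd hint
  simp [Real.sin_pi] at h
  have hsplit : (fun t : ℝ => Real.exp (x * Real.cos t) * (Real.cos t - x * (1 - Real.cos t ^ 2)))
      = fun t : ℝ => (Real.exp (x * Real.cos t) * Real.cos t - x * Real.exp (x * Real.cos t))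
          + x * (Real.exp (x * Real.cos t) * Real.cos t ^ 2) := by
    funext t; ring
  rw [hsplit] at h
  rw [integral_add ((ic (by fun_prop)).sub (ic (by fun_prop))) (ic (by fun_prop)),
    integral_sub (ic (by fun_prop)) (ic (by fun_prop)), intervalIntegral.integral_const_mul, intervalIntegral.integral_const_mul] at h
  apply mul_left_cancel₀ hx
  rw [mul_sub, ← mul_assoc, mul_one_div_cancel hx, one_mul]
  linarith [h]

lemma hI0' (x : ℝ) : HasDerivAt I0 (I1 x) x := by
  have h := (hasDerivAt_f0 x).const_mul (1/π)
  show HasDerivAt (fun y => I0 y) (I1 x) x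
  simpa only [I0, I1, one_div] using h

lemma hI1' {x : ℝ} (hx : x ≠ 0) : HasDerivAt I1 (I0 x - I1 x / x) x := by
  have h := (hasDerivAt_f1 x).const_mul (1/π)
  have hπ := Real.pi_pos
  have heq : (1/π) * ∫ t in (0:ℝ)..π, Real.exp (x * Real.cos t) * Real.cos t ^ 2
      = I0 x - I1 x / x := by
    rw [parts_identity hx, I0, I1]
    field_simp
  rw [heq] at h
  show HasDerivAt (fun y => I1 y) (I0 x - I1 x / x) x
  simpa only [I1, one_div] using h

/-- generic first-touch lemma -/
lemma pos_of_pos_deriv_at_zero {f F : ℝ → ℝ} {a : ℝ}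
    (hd : ∀ z, a ≤ z → HasDerivAt f (F z) z)
    (hfa : 0 < f a)
    (key : ∀ z, a ≤ z → f z = 0 → 0 < F z) :
    ∀ z, a ≤ z → 0 < f z := by
  intro b hb
  by_contra hfb
  push_neg at hfb
  have hcont : ContinuousOn f (Set.Icc a b) := fun z hz =>
    ((hd z hz.1).continuousAt).continuousWithinAt
  set S : Set ℝ := Set.Icc a b ∩ f ⁻¹' Set.Iic 0 with hS
  have hSne : S.Nonempty := ⟨b, ⟨⟨hb, le_rfl⟩, hfb⟩⟩
  have hSb : BddBelow S := ⟨a, fun z hz => hz.1.1⟩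
  have hScl : IsClosed S :=
    hcont.preimage_isClosed_of_isClosed isClosed_Icc isClosed_Iic
  set m := sInf S with hm
  have hmS : m ∈ S := IsClosed.csInf_mem hScl hSne hSb
  have hma : a ≤ m := hmS.1.1
  have hmb : m ≤ b := hmS.1.2
  have hfm_le : f m ≤ 0 := hmS.2
  have ham : a < m := by
    rcases lt_or_eq_of_le hma with h | h
    · exact h
    · exfalso; rw [← h] at hfm_le; linarith
  -- f is positive on [a, m)
  have hpos : ∀ z, a ≤ z → z < m → 0 < f z := by
    intro z hza hzm
    by_contra hz
    push_neg at hz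
    have : z ∈ S := ⟨⟨hza, le_trans hzm.le hmb⟩, hz⟩
    exact absurd (csInf_le hSb this) (not_le.mpr hzm)
  -- f m = 0 by left continuity
  have hfm : f m = 0 := by
    refine le_antisymm hfm_le ?_
    have htend : Filter.Tendsto f (nhdsWithin m (Set.Iio m)) (nhds (f m)) :=
      ((hd m hma).continuousAt).continuousWithinAt.tendsto
    have hev : ∀ᶠ z in nhdsWithin m (Set.Iio m), 0 ≤ f z := by
      filter_upwards [eventually_mem_nhdsWithin,
        eventually_nhdsWithin_of_eventually_nhds (eventually_gt_nhds ham)] with z hz1 hz2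
      exact (hpos z hz2.le hz1).le
    exact ge_of_tendsto htend hev
  have hF := key m hma hfm
  -- but the left derivative is nonpositive
  have hslope : Filter.Tendsto (slope f m) (nhdsWithin m (Set.Iio m)) (nhds (F m)) := by
    have := hasDerivAt_iff_tendsto_slope.mp (hd m hma)
    exact this.mono_left (nhdsWithin_mono m (by intro z hz; exact ne_of_lt hz))
  have hev : ∀ᶠ z in nhdsWithin m (Set.Iio m), slope f m z ≤ 0 := by
    filter_upwards [eventually_mem_nhdsWithin,
      eventually_nhdsWithin_of_eventually_nhds (eventually_gt_nhds ham)] with z hz1 hz2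
    rw [slope_def_field, hfm]
    have h1 : 0 < f z := hpos z hz2.le hz1
    have h2 : z - m < 0 := sub_neg.mpr hz1
    rw [div_nonpos_iff]
    left
    constructor
    · simpa using h1.le
    · linarith
  have : F m ≤ 0 := le_of_tendsto hslope hev
  linarith

def cc : ℝ := 399/200

def ss (z : ℝ) : ℝ := Real.sqrt (cc^2 + 4*z^2)

def ψ (z : ℝ) : ℝ := (ss z - cc)/(2*z)

lemma ss_sq (z : ℝ) : ss z ^ 2 = cc^2 + 4*z^2 := by
  rw [ss, sq, Real.mul_self_sqrt]
  have : (0:ℝ) < cc := by rw [cc]; norm_num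
  nlinarith [sq_nonneg z]

lemma ss_pos (z : ℝ) : 0 < ss z := by
  rw [ss]
  apply Real.sqrt_pos.mpr
  have : (0:ℝ) < cc := by rw [cc]; norm_num
  nlinarith [sq_nonneg z]

lemma ss_gt_cc {z : ℝ} (hz : 0 < z) : cc < ss z := by
  have h1 := ss_sq z
  have h2 := ss_pos z
  have hc : (0:ℝ) < cc := by rw [cc]; norm_num
  nlinarith

lemma hasDerivAt_ss {z : ℝ} (hz : 0 < z) : HasDerivAt ss (4*z/ss z) z := by
  have hq : HasDerivAt (fun y : ℝ => cc^2 + 4*y^2) (8*z) z := by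
    have := ((hasDerivAt_pow 2 z).const_mul 4).const_add (cc^2)
    refine this.congr_deriv (Eq.symm ?_)
    ring
  have hne : cc^2 + 4*z^2 ≠ 0 := by
    have hc : (0:ℝ) < cc := by rw [cc]; norm_num
    positivity
  have h := hq.sqrt hne
  have hsp := ss_pos z
  refine h.congr_deriv (Eq.symm ?_)
  rw [show Real.sqrt (cc^2+4*z^2) = ss z from rfl]
  field_simp
  ring

lemma hasDerivAt_ψ {z : ℝ} (hz : 0 < z) :
    HasDerivAt ψ (cc*(ss z - cc)/(2*z^2*ss z)) z := by
  have h1 : HasDerivAt (fun y : ℝ => ss y - cc) (4*z/ss z) z := (hasDerivAt_ss hz).sub_const cc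
  have h2 : HasDerivAt (fun y : ℝ => 2*y) 2 z := by
    simpa using (hasDerivAt_id z).const_mul 2
  have h := h1.div h2 (by positivity)
  have hs := ss_sq z
  have hsp := ss_pos z
  refine h.congr_deriv (Eq.symm ?_)
  show cc*(ss z - cc)/(2*z^2*ss z) = (4*z/ss z * (2*z) - (ss z - cc)*2)/(2*z)^2
  field_simp
  linear_combination hs

lemma bracket_pos {z : ℝ} (hz : 1/5 ≤ z) :
    0 < 1 - ψ z/z - (ψ z)^2 - cc*(ss z - cc)/(2*z^2*ss z) := by
  have hz0 : (0:ℝ) < z := by linarith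
  have hs := ss_sq z
  have hsp := ss_pos z
  have hsc := ss_gt_cc hz0
  have hkey : 0 < (cc - 1) * ss z - cc := by
    have hcc : cc = 399/200 := rfl
    rw [hcc] at hs hsc ⊢
    nlinarith [hs, hsp, hsc]
  have h1 : ψ z / z = (ss z - cc)/(2*z^2) := by
    rw [ψ, div_div]; congr 1; ring
  have h2 : (ψ z)^2 = (ss z - cc)^2/(4*z^2) := by
    rw [ψ, div_pow]; congr 1; ring
  have h3 : ψ z/z + (ψ z)^2 + cc*(ss z - cc)/(2*z^2*ss z)
      = (2*ss z*(ss z - cc) + ss z*(ss z - cc)^2 + 2*cc*(ss z - cc))/(4*z^2*ss z) := by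
    rw [h1, h2]
    field_simp
    ring
  have hnum : 2*ss z*(ss z - cc) + ss z*(ss z - cc)^2 + 2*cc*(ss z - cc)
      = 4*z^2*ss z - 2*(ss z - cc)*((cc - 1)*ss z - cc) := by
    linear_combination (ss z) * hs
  have h4 : ψ z/z + (ψ z)^2 + cc*(ss z - cc)/(2*z^2*ss z) < 1 := by
    rw [h3, hnum, div_lt_one (by positivity)]
    nlinarith [mul_pos (sub_pos.mpr hsc) hkey]
  linarith

lemma ss_lt_ub : ss (1/5) < 203471/100000 := by
  rw [ss]
  rw [show Real.sqrt (cc^2 + 4*(1/5:ℝ)^2) = Real.sqrt (4.140025) by norm_num [cc]]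
  rw [show (203471/100000:ℝ) = Real.sqrt ((203471/100000)^2) by
    rw [Real.sqrt_sq (by norm_num)]]
  apply Real.sqrt_lt_sqrt (by norm_num)
  norm_num

lemma g_base : 0 < I1 (1/5) - ψ (1/5) * I0 (1/5) := by
  have h0 := I0_est (z := 1/5) (by norm_num) (by norm_num)
  have h1 := I1_est (z := 1/5) (by norm_num) (by norm_num)
  rw [abs_le] at h0 h1
  have hub := ss_lt_ub
  have hlb := ss_gt_cc (z := 1/5) (by norm_num)
  have hcc : cc = 399/200 := rfl
  have hI0pos : 0 < I0 (1/5) := lt_of_lt_of_le one_pos (I0_ge_one _)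
  rw [ψ]
  have key : (ss (1/5) - cc)/(2*(1/5:ℝ)) * I0 (1/5) < I1 (1/5) := by
    have h2 : (ss (1/5) - cc)/(2*(1/5:ℝ)) < 3971/40000 := by
      rw [div_lt_iff₀ (by norm_num)]
      nlinarith [hub, hcc]
    have h3 : (0:ℝ) ≤ (ss (1/5) - cc)/(2*(1/5:ℝ)) := by
      apply div_nonneg (by linarith) (by norm_num)
    calc (ss (1/5) - cc)/(2*(1/5:ℝ)) * I0 (1/5) < 3971/40000 * I0 (1/5) := by
          apply mul_lt_mul_of_pos_right h2 hI0pos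
      _ ≤ I1 (1/5) := by nlinarith [h0.1, h0.2, h1.1, h1.2]
  linarith

lemma g_hasDeriv {z : ℝ} (hz : (1/5:ℝ) ≤ z) :
    HasDerivAt (fun y => I1 y - ψ y * I0 y)
      (I0 z - I1 z / z - (cc*(ss z - cc)/(2*z^2*ss z) * I0 z + ψ z * I1 z)) z := by
  have hz0 : (0:ℝ) < z := by linarith
  exact (hI1' hz0.ne').sub ((hasDerivAt_ψ hz0).mul (hI0' z))

lemma g_pos : ∀ z, (1/5:ℝ) ≤ z → 0 < I1 z - ψ z * I0 z := by
  apply pos_of_pos_deriv_at_zero (fun z hz => g_hasDeriv hz) g_base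
  intro z hz h0
  have hI0pos : 0 < I0 z := lt_of_lt_of_le one_pos (I0_ge_one _)
  have hI1 : I1 z = ψ z * I0 z := by linarith
  have hb := bracket_pos hz
  have hz0 : (0:ℝ) < z := by linarith
  have : I0 z - I1 z / z - (cc*(ss z - cc)/(2*z^2*ss z) * I0 z + ψ z * I1 z)
      = I0 z * (1 - ψ z/z - (ψ z)^2 - cc*(ss z - cc)/(2*z^2*ss z)) := by
    rw [hI1]
    field_simp
    ring
  rw [this]
  exact mul_pos hI0pos hb

lemma ψ_pos {z : ℝ} (hz : 0 < z) : 0 < ψ z := by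
  have := ss_gt_cc hz
  rw [ψ]
  apply div_pos (by linarith) (by linarith)

lemma I1_pos_of_ge {z : ℝ} (hz : (1/5:ℝ) ≤ z) : 0 < I1 z := by
  have h := g_pos z hz
  have hψ := ψ_pos (show (0:ℝ) < z by linarith)
  have hI0pos : 0 < I0 z := lt_of_lt_of_le one_pos (I0_ge_one _)
  nlinarith

def AA (z : ℝ) : ℝ := z*(I0 z^2 - I1 z^2) - I0 z * I1 z

lemma hasDerivAt_AA {z : ℝ} (hz : 0 < z) :
    HasDerivAt AA (I0 z * I1 z / z) z := by
  have h0 := hI0' z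
  have h1 := hI1' hz.ne'
  have hsq0 : HasDerivAt (fun y => I0 y^2) (2 * I0 z * I1 z) z := by
    have := h0.pow 2
    refine this.congr_deriv (Eq.symm ?_); simp [pow_one]
  have hsq1 : HasDerivAt (fun y => I1 y^2) (2 * I1 z * (I0 z - I1 z / z)) z := by
    have := h1.pow 2
    refine this.congr_deriv (Eq.symm ?_); simp [pow_one]
  have hfirst : HasDerivAt (fun y => y*(I0 y^2 - I1 y^2))
      ((I0 z^2 - I1 z^2) + z * (2 * I0 z * I1 z - 2 * I1 z * (I0 z - I1 z / z))) z := by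
    have := (hasDerivAt_id z).mul (hsq0.sub hsq1)
    refine this.congr_deriv (Eq.symm ?_); simp only [id, Pi.sub_apply]; ring
  have hsecond : HasDerivAt (fun y => I0 y * I1 y)
      (I1 z * I1 z + I0 z * (I0 z - I1 z / z)) z := h0.mul h1
  have h := hfirst.sub hsecond
  have : HasDerivAt AA ((I0 z^2 - I1 z^2) + z * (2 * I0 z * I1 z - 2 * I1 z * (I0 z - I1 z / z))
      - (I1 z * I1 z + I0 z * (I0 z - I1 z / z))) z := h
  convert this using 1
  field_simp
  ring

lemma AA_base : 0 ≤ AA (1/5) := by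
  have h0 := I0_est (z := 1/5) (by norm_num) (by norm_num)
  have h1 := I1_est (z := 1/5) (by norm_num) (by norm_num)
  rw [abs_le] at h0 h1
  rw [AA]
  nlinarith [h0.1, h0.2, h1.1, h1.2, I0_ge_one (1/5:ℝ)]

lemma AA_nonneg : ∀ z, (1/5:ℝ) ≤ z → 0 ≤ AA z := by
  intro b hb
  rcases eq_or_lt_of_le hb with h | h
  · rw [← h]; exact AA_base
  have hmono : MonotoneOn AA (Set.Icc (1/5:ℝ) b) := by
    apply monotoneOn_of_deriv_nonneg (convex_Icc _ _)
    · intro x hx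
      exact ((hasDerivAt_AA (by linarith [hx.1] : (0:ℝ) < x)).continuousAt).continuousWithinAt
    · intro x hx
      rw [interior_Icc] at hx
      exact ((hasDerivAt_AA (by linarith [hx.1] : (0:ℝ) < x)).differentiableAt).differentiableWithinAt
    · intro x hx
      rw [interior_Icc] at hx
      have hx0 : (0:ℝ) < x := by linarith [hx.1]
      rw [(hasDerivAt_AA hx0).deriv]
      have hI1 : 0 < I1 x := I1_pos_of_ge hx.1.le
      have hI0 : 0 < I0 x := lt_of_lt_of_le one_pos (I0_ge_one _)
      positivity
  calc (0:ℝ) ≤ AA (1/5) := AA_base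
    _ ≤ AA b := hmono ⟨le_refl _, hb⟩ ⟨hb, le_refl _⟩ hb

lemma I1_pos_small {z : ℝ} (h0 : 0 < z) (h1 : z ≤ 1/5) : 0 < I1 z := by
  have h := I1_est h0.le (by linarith)
  rw [abs_le] at h
  nlinarith [h.1]

lemma part_i_a {z : ℝ} (h0 : 0 < z) (h1 : z ≤ 1/5) : |I1 z / I0 z - z/2| ≤ z^2/8 := by
  have hI0 : 0 < I0 z := lt_of_lt_of_le one_pos (I0_ge_one _)
  have he0 := I0_est h0.le (by linarith)
  have he1 := I1_est h0.le (by linarith)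
  rw [abs_le] at he0 he1
  have heq : I1 z / I0 z - z/2 = (I1 z - z/2 * I0 z)/I0 z := by
    field_simp
  rw [heq, abs_div, abs_of_pos hI0, div_le_iff₀ hI0, abs_le]
  have hz2 : z^2 ≤ z/5 := by nlinarith
  have hz3 : z^3 ≤ z^2/5 := by nlinarith
  have hz4 : z^4 ≤ z^3/5 := by nlinarith
  have hp1 := mul_le_mul_of_nonneg_left he0.2 (show (0:ℝ) ≤ z/2 by linarith)
  have hp2 := mul_le_mul_of_nonneg_left he0.1 (show (0:ℝ) ≤ z/2 by linarith)
  constructor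
  · nlinarith [he0.1, he0.2, he1.1, he1.2, I0_ge_one z, hp1, hp2]
  · nlinarith [he0.1, he0.2, he1.1, he1.2, I0_ge_one z, hp1, hp2]

lemma part_i_b {z : ℝ} (h0 : 0 < z) (h1 : z ≤ 1/5) : |I0 z / I1 z - 2/z - z/4| ≤ z^2/8 := by
  have hI0 : 0 < I0 z := lt_of_lt_of_le one_pos (I0_ge_one _)
  have hI1 : 0 < I1 z := I1_pos_small h0 h1
  have he0 := I0_est h0.le (by linarith)
  have he1 := I1_est h0.le (by linarith)
  rw [abs_le] at he0 he1
  have heq : I0 z / I1 z - 2/z - z/4 = (4*z*I0 z - 8*I1 z - z^2*I1 z)/(4*z*I1 z) := by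
    field_simp
    ring
  rw [heq, abs_div, abs_of_pos (by positivity : (0:ℝ) < 4*z*I1 z),
    div_le_iff₀ (by positivity : (0:ℝ) < 4*z*I1 z), abs_le]
  have hz2 : z^2 ≤ z/5 := by nlinarith
  have hz3 : z^3 ≤ z^2/5 := by nlinarith
  have hz4 : z^4 ≤ z^3/5 := by nlinarith
  have hp1 := mul_le_mul_of_nonneg_left he0.2 (show (0:ℝ) ≤ 4*z by linarith)
  have hp2 := mul_le_mul_of_nonneg_left he0.1 (show (0:ℝ) ≤ 4*z by linarith)
  have hp3 := mul_le_mul_of_nonneg_left he1.2 (show (0:ℝ) ≤ z^2 by positivity)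
  have hp4 := mul_le_mul_of_nonneg_left he1.1 (show (0:ℝ) ≤ z^2 by positivity)
  have hp5 := mul_le_mul_of_nonneg_left he1.2 (show (0:ℝ) ≤ z^3/2 by positivity)
  have hp6 := mul_le_mul_of_nonneg_left he1.1 (show (0:ℝ) ≤ z^3/2 by positivity)
  constructor
  · nlinarith [hp1, hp2, hp3, hp4, hp5, hp6, he1.1, he1.2]
  · nlinarith [hp1, hp2, hp3, hp4, hp5, hp6, he1.1, he1.2]

lemma ψ_quad {z : ℝ} (hz : 0 < z) : z*(ψ z)^2 + cc*ψ z = z := by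
  have hs := ss_sq z
  rw [ψ]
  field_simp
  linear_combination hs

theorem stmt5 :
    ∃ δ ∈ Set.Ioo (0:ℝ) (1/4), ∃ c : ℝ, c < 2 ∧
      (∀ z : ℝ, 0 < z → z ≤ δ →
        |I1 z / I0 z - z / 2| ≤ z ^ 2 / 8 ∧
          |I0 z / I1 z - 2 / z - z / 4| ≤ z ^ 2 / 8) ∧
      ∀ z : ℝ, δ ≤ z →
        1 / z ≤ I0 z / I1 z - I1 z / I0 z ∧ I0 z / I1 z - I1 z / I0 z ≤ c / z := by
  refine ⟨1/5, ⟨by norm_num, by norm_num⟩, cc, by rw [cc]; norm_num, ?_, ?_⟩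
  · intro z hz0 hz1
    constructor
    · have := part_i_a hz0 hz1
      convert this using 2 <;> ring
    · have := part_i_b hz0 hz1
      convert this using 2 <;> ring
  · intro z hz
    have hz0 : (0:ℝ) < z := by linarith
    have hI0 : 0 < I0 z := lt_of_lt_of_le one_pos (I0_ge_one _)
    have hI1 : 0 < I1 z := I1_pos_of_ge hz
    constructor
    · have hA := AA_nonneg z hz
      rw [AA] at hA
      rw [div_sub_div _ _ hI1.ne' hI0.ne', div_le_div_iff₀ hz0 (by positivity)]
      nlinarith [hA]
    · have hg := g_pos z hz
      have hq := ψ_quad hz0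
      have hψ := ψ_pos hz0
      rw [div_sub_div _ _ hI1.ne' hI0.ne', div_le_div_iff₀ (by positivity) hz0]
      nlinarith [mul_nonneg (by nlinarith : (0:ℝ) ≤ I1 z - ψ z * I0 z)
        (by nlinarith [mul_nonneg hz0.le hI1.le, mul_nonneg (mul_nonneg hz0.le hψ.le) hI0.le,
          mul_nonneg (show (0:ℝ) ≤ cc by rw [cc]; norm_num) hI0.le]
          : (0:ℝ) ≤ z*I1 z + z*ψ z*I0 z + cc*I0 z), hq, hψ.le, hI0.le]
end
end
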